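/- arXiv:1311.7007 — 2 statements merged into one kernel-verified Lean document; each statement's English description precedes it below -/
import Mathlib

section
/- Let m > 1, α ∈ (0,1), T > 0, and let Ω ⊂ ℝ be a bounded open set. Let v : ℝ × [0,T] → ℝ and Φ : ℝ × [0,T] → ℝ be bounded and continuous, twice continuously differentiable in x with bounded second derivatives and continuously differentiable in t on ℝ × (0,T]. Assume: (i) ∂_t v(x,t) + |∂_x v(x,t)|^(m−1) · L_α v(·,t)(x) ≥ 0 for all x ∈ ℝ and t ∈ (0,T] (v is a classical supersolution); (ii) ∂_t Φ(x,t) + |∂_x Φ(x,t)|^(m−1) · L_α Φ(·,t)(x) < 0 for all x ∈ Ω and t ∈ (0,T] (Φ is a strict classical subsolution on Ω); (iii) Φ(x,0) < v(x,0) for all x ∈ ℝ (comparison at initial time); (iv) Φ(x,t) < v(x,t) for all x ∈ ℝ ∖ Ω and t ∈ (0,T] (comparison on the parabolic boundary). Then Φ(x,t) ≤ v(x,t) for all x ∈ ℝ and t ∈ [0,T]. -/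
open MeasureTheory Topology


lemma aux_deriv_nonneg (g : ℝ → ℝ) (a : ℝ) (ha : 0 < a) (hd : DifferentiableAt ℝ g a)
    (hle : ∀ t ∈ Set.Ioo (0:ℝ) a, g t ≤ g a) : 0 ≤ deriv g a := by
  have h := hd.hasDerivAt
  rw [hasDerivAt_iff_tendsto_slope] at h
  have hmono : 𝓝[<] a ≤ 𝓝[≠] a := nhdsWithin_mono _ (fun x hx => ne_of_lt hx)
  refine ge_of_tendsto (h.mono_left hmono) ?_
  filter_upwards [Ioo_mem_nhdsLT_of_mem (⟨ha, le_refl a⟩ : a ∈ Set.Ioc 0 a)] with t ht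
  have h1 : g t - g a ≤ 0 := sub_nonpos.mpr (hle t ht)
  have h2 : t - a < 0 := sub_neg.mpr ht.2
  rw [slope_def_field]
  rw [div_nonneg_iff]; right; exact ⟨h1, h2.le⟩

lemma aux_taylor (f : ℝ → ℝ) (K : ℝ) (hf : ContDiff ℝ 2 f)
    (hK : ∀ y, |deriv (deriv f) y| ≤ K) (x z : ℝ) :
    |2 * f x - f (x + z) - f (x - z)| ≤ 2 * K * z ^ 2 := by
  have hf1 : ContDiff ℝ 1 (deriv f) :=
    (contDiff_succ_iff_deriv.mp (show ContDiff ℝ (1+1) f by norm_num; exact hf)).2.2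
  have hfd : Differentiable ℝ f := hf.differentiable (by norm_num)
  have hf'd : Differentiable ℝ (deriv f) := hf1.differentiable (by norm_num)
  have hlip : ∀ a b : ℝ, |deriv f a - deriv f b| ≤ K * |a - b| := by
    intro a b
    have := Convex.norm_image_sub_le_of_norm_deriv_le (f := deriv f) (s := Set.univ)
      (fun y _ => hf'd y) (fun y _ => hK y) convex_univ (Set.mem_univ b) (Set.mem_univ a)
    simpa [Real.norm_eq_abs] using this
  set g : ℝ → ℝ := fun w => f (x + w) + f (x - w) - 2 * f x with hg
  have hgd : ∀ w : ℝ, HasDerivAt g (deriv f (x + w) - deriv f (x - w)) w := by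
    intro w
    have h1 : HasDerivAt (fun w : ℝ => f (x + w)) (deriv f (x + w)) w := by
      have := ((hfd (x + w)).hasDerivAt).comp w ((hasDerivAt_id w).const_add x)
      simpa [Function.comp_def] using this
    have h2 : HasDerivAt (fun w : ℝ => f (x - w)) (-deriv f (x - w)) w := by
      have := ((hfd (x - w)).hasDerivAt).comp w ((hasDerivAt_id w).const_sub x)
      simpa [Function.comp_def] using this
    exact ((h1.add h2).sub_const (2 * f x)).congr_deriv (by ring)
  have hbound : ∀ w ∈ Set.uIcc (0:ℝ) z, ‖deriv g w‖ ≤ 2 * K * |z| := by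
    intro w hw
    have habs : |w| ≤ |z| := by
      rcases Set.mem_uIcc.mp hw with h | h
      · rw [abs_of_nonneg h.1]; exact le_trans h.2 (le_abs_self z)
      · rw [abs_of_nonpos h.2]; exact le_trans (neg_le_neg h.1) (neg_le_abs z)
    rw [(hgd w).deriv, Real.norm_eq_abs]
    calc |deriv f (x + w) - deriv f (x - w)| ≤ K * |(x + w) - (x - w)| := hlip _ _
      _ = 2 * K * |w| := by rw [show (x + w) - (x - w) = 2 * w by ring, abs_mul]; norm_num; ring
      _ ≤ 2 * K * |z| := by
          have hK0 : 0 ≤ K := le_trans (abs_nonneg _) (hK 0)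
          nlinarith [abs_nonneg w]
  have := Convex.norm_image_sub_le_of_norm_deriv_le (f := g) (s := Set.uIcc 0 z)
    (fun y _ => (hgd y).differentiableAt) hbound (convex_uIcc 0 z)
    (Set.left_mem_uIcc) (Set.right_mem_uIcc)
  have hg0 : g 0 = 0 := by simp only [hg]; ring_nf
  rw [hg0, sub_zero, Real.norm_eq_abs, Real.norm_eq_abs, sub_zero] at this
  calc |2 * f x - f (x + z) - f (x - z)| = |g z| := by rw [abs_sub_comm]; congr 1; simp [hg]; ring
    _ ≤ 2 * K * |z| * |z| := this
    _ = 2 * K * z ^ 2 := by rw [mul_assoc, ← abs_mul, ← sq, abs_sq]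

lemma aux_integrable (α : ℝ) (hα1 : (0:ℝ) < α) (hα2 : α < 1) (f : ℝ → ℝ) (M K : ℝ)
    (hf : ContDiff ℝ 2 f) (hM : ∀ y, |f y| ≤ M) (hK : ∀ y, |deriv (deriv f) y| ≤ K) (x : ℝ) :
    IntegrableOn (fun z => (2 * f x - f (x + z) - f (x - z)) / z ^ (1 + 2 * α))
      (Set.Ioi (0:ℝ)) := by
  have hfc : Continuous f := hf.continuous
  have hmeas : AEStronglyMeasurable
      (fun z => (2 * f x - f (x + z) - f (x - z)) / z ^ (1 + 2 * α))
      (volume.restrict (Set.Ioi (0:ℝ))) := by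
    apply ContinuousOn.aestronglyMeasurable _ measurableSet_Ioi
    apply ContinuousOn.div
    · exact (continuous_const.sub ((hfc.comp (continuous_const.add continuous_id)))
        |>.sub (hfc.comp (continuous_const.sub continuous_id))).continuousOn
    · exact fun z hz => (Real.continuousAt_rpow_const z _ (Or.inl (ne_of_gt hz))).continuousWithinAt
    · exact fun z hz => ne_of_gt (Real.rpow_pos_of_pos hz _)
  rw [← Set.Ioc_union_Ioi_eq_Ioi (le_of_lt one_pos)]
  apply IntegrableOn.union
  · have hdom : IntegrableOn (fun z : ℝ => 2 * K * z ^ (1 - 2 * α)) (Set.Ioc (0:ℝ) 1) := by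
      have h1 : IntervalIntegrable (fun z : ℝ => z ^ (1 - 2 * α)) volume 0 1 :=
        intervalIntegral.intervalIntegrable_rpow' (by linarith)
      rw [intervalIntegrable_iff_integrableOn_Ioc_of_le (by norm_num : (0:ℝ) ≤ 1)] at h1
      exact h1.const_mul _
    apply Integrable.mono' hdom
      (hmeas.mono_measure (Measure.restrict_mono Set.Ioc_subset_Ioi_self le_rfl))
    filter_upwards [ae_restrict_mem measurableSet_Ioc] with z hz
    have hz0 : 0 < z := hz.1
    rw [Real.norm_eq_abs, abs_div, abs_of_pos (Real.rpow_pos_of_pos hz0 _),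
      div_le_iff₀ (Real.rpow_pos_of_pos hz0 _)]
    calc |2 * f x - f (x + z) - f (x - z)| ≤ 2 * K * z ^ 2 := aux_taylor f K hf hK x z
      _ = 2 * K * z ^ (1 - 2*α) * z ^ (1 + 2*α) := by
          rw [mul_assoc, mul_assoc, ← Real.rpow_add hz0,
            show (1:ℝ) - 2*α + (1 + 2*α) = 2 by ring, Real.rpow_two]
          ring
  · have hdom : IntegrableOn (fun z : ℝ => 4 * M * z ^ (-(1 + 2 * α))) (Set.Ioi (1:ℝ)) := by
      have h1 : IntegrableOn (fun z : ℝ => z ^ (-(1 + 2 * α))) (Set.Ioi (1:ℝ)) :=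
        integrableOn_Ioi_rpow_of_lt (by linarith) one_pos
      exact h1.const_mul _
    apply Integrable.mono' hdom
      (hmeas.mono_measure (Measure.restrict_mono (Set.Ioi_subset_Ioi (le_of_lt one_pos)) le_rfl))
    filter_upwards [ae_restrict_mem measurableSet_Ioi] with z hz
    have hz0 : (0:ℝ) < z := lt_trans one_pos hz
    rw [Real.norm_eq_abs, abs_div, abs_of_pos (Real.rpow_pos_of_pos hz0 _),
      div_eq_mul_inv, ← Real.rpow_neg hz0.le]
    apply mul_le_mul_of_nonneg_right _ (Real.rpow_nonneg hz0.le _)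
    rcases abs_le.mp (hM x) with ⟨a1, a2⟩
    rcases abs_le.mp (hM (x + z)) with ⟨b1, b2⟩
    rcases abs_le.mp (hM (x - z)) with ⟨c1, c2⟩
    have hM0 : 0 ≤ M := le_trans (abs_nonneg _) (hM x)
    rw [abs_le]; constructor <;> linarith

/-- The (unnormalized) one-dimensional fractional Laplacian of order `α`:
`L_α f(x) = ∫_0^∞ (2 f(x) − f(x+z) − f(x−z)) / z^(1+2α) dz`. -/
noncomputable def fracLap (α : ℝ) (f : ℝ → ℝ) (x : ℝ) : ℝ :=
  ∫ z in Set.Ioi (0 : ℝ), (2 * f x - f (x + z) - f (x - z)) / z ^ (1 + 2 * α)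

/-- Parabolic comparison principle for the integrated equation
`∂_t v + |∂_x v|^(m−1) L_α v = 0`: if `v` is a bounded classical supersolution on
`ℝ × (0,T]`, `Φ` is a strict classical subsolution on `Ω × (0,T]` for a bounded open
set `Ω ⊆ ℝ`, `Φ < v` at the initial time and on `(ℝ ∖ Ω) × (0,T]`, then `Φ ≤ v` on
`ℝ × [0,T]`. -/
theorem parabolic_comparison (m α T : ℝ) (hm : 1 < m) (hα : α ∈ Set.Ioo (0 : ℝ) 1)
    (hT : 0 < T) (Ω : Set ℝ) (hΩo : IsOpen Ω) (hΩb : Bornology.IsBounded Ω)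
    (v Φ : ℝ → ℝ → ℝ)
    -- regularity of v
    (hvb : ∃ M, ∀ x : ℝ, ∀ t ∈ Set.Icc (0 : ℝ) T, |v x t| ≤ M)
    (hvc : ContinuousOn (fun p : ℝ × ℝ => v p.1 p.2) (Set.univ ×ˢ Set.Icc (0 : ℝ) T))
    (hvx : ∀ t ∈ Set.Ioc (0 : ℝ) T, ContDiff ℝ 2 (fun x => v x t))
    (hvxx : ∃ K, ∀ x : ℝ, ∀ t ∈ Set.Ioc (0 : ℝ) T, |deriv (deriv (fun x => v x t)) x| ≤ K)
    (hvt : ∀ x : ℝ, ∀ t ∈ Set.Ioc (0 : ℝ) T, DifferentiableAt ℝ (v x) t)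
    -- regularity of Φ
    (hΦb : ∃ M, ∀ x : ℝ, ∀ t ∈ Set.Icc (0 : ℝ) T, |Φ x t| ≤ M)
    (hΦc : ContinuousOn (fun p : ℝ × ℝ => Φ p.1 p.2) (Set.univ ×ˢ Set.Icc (0 : ℝ) T))
    (hΦx : ∀ t ∈ Set.Ioc (0 : ℝ) T, ContDiff ℝ 2 (fun x => Φ x t))
    (hΦxx : ∃ K, ∀ x : ℝ, ∀ t ∈ Set.Ioc (0 : ℝ) T, |deriv (deriv (fun x => Φ x t)) x| ≤ K)
    (hΦt : ∀ x : ℝ, ∀ t ∈ Set.Ioc (0 : ℝ) T, DifferentiableAt ℝ (Φ x) t)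
    -- (i) v is a classical supersolution
    (hsuper : ∀ x : ℝ, ∀ t ∈ Set.Ioc (0 : ℝ) T,
      0 ≤ deriv (v x) t + |deriv (fun y => v y t) x| ^ (m - 1) * fracLap α (fun y => v y t) x)
    -- (ii) Φ is a strict classical subsolution on Ω
    (hsub : ∀ x ∈ Ω, ∀ t ∈ Set.Ioc (0 : ℝ) T,
      deriv (Φ x) t + |deriv (fun y => Φ y t) x| ^ (m - 1) * fracLap α (fun y => Φ y t) x < 0)
    -- (iii) comparison at initial time
    (hinit : ∀ x : ℝ, Φ x 0 < v x 0)
    -- (iv) comparison on the parabolic boundary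
    (hbdry : ∀ x : ℝ, x ∉ Ω → ∀ t ∈ Set.Ioc (0 : ℝ) T, Φ x t < v x t) :
    ∀ x : ℝ, ∀ t ∈ Set.Icc (0 : ℝ) T, Φ x t ≤ v x t := by
  by_contra hcon
  push_neg at hcon
  obtain ⟨x₀, t₀, ht₀, hx₀⟩ := hcon
  have huc : ContinuousOn (fun p : ℝ × ℝ => Φ p.1 p.2 - v p.1 p.2)
      (Set.univ ×ˢ Set.Icc (0 : ℝ) T) := hΦc.sub hvc
  have ht₀0 : 0 < t₀ := by
    rcases lt_or_eq_of_le ht₀.1 with h | h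
    · exact h
    · exfalso; rw [← h] at hx₀; exact absurd hx₀ (not_lt.mpr (hinit x₀).le)
  have hx₀Ω : x₀ ∈ Ω := by
    by_contra h
    exact absurd hx₀ (not_lt.mpr (hbdry x₀ h t₀ ⟨ht₀0, ht₀.2⟩).le)
  set Kset : Set (ℝ × ℝ) := closure Ω ×ˢ Set.Icc 0 T with hKset
  have hKc : IsCompact Kset := (hΩb.isCompact_closure).prod isCompact_Icc
  have hucK : ContinuousOn (fun p : ℝ × ℝ => Φ p.1 p.2 - v p.1 p.2) Kset :=
    huc.mono (fun p hp => ⟨Set.mem_univ _, hp.2⟩)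
  set A : Set (ℝ × ℝ) := Kset ∩ (fun p : ℝ × ℝ => Φ p.1 p.2 - v p.1 p.2) ⁻¹' Set.Ici 0 with hA
  have hAcl : IsClosed A :=
    hucK.preimage_isClosed_of_isClosed hKc.isClosed isClosed_Ici
  have hAc : IsCompact A := hKc.of_isClosed_subset hAcl Set.inter_subset_left
  have hAne : A.Nonempty :=
    ⟨(x₀, t₀), ⟨subset_closure hx₀Ω, ht₀⟩, le_of_lt (sub_pos.mpr hx₀)⟩
  obtain ⟨p, hpA, hpmin⟩ := hAc.exists_isMinOn hAne continuous_snd.continuousOn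
  have hts : p.2 ∈ Set.Icc (0:ℝ) T := hpA.1.2
  have hus : (0:ℝ) ≤ Φ p.1 p.2 - v p.1 p.2 := hpA.2
  have hts0 : 0 < p.2 := by
    rcases lt_or_eq_of_le hts.1 with h | h
    · exact h
    · exfalso
      rw [← h] at hus
      have := hinit p.1
      linarith
  have htsIoc : p.2 ∈ Set.Ioc (0:ℝ) T := ⟨hts0, hts.2⟩
  -- strictly below before time p.2
  have hlt : ∀ x t, 0 ≤ t → t < p.2 → Φ x t < v x t := by
    intro x t h0 hltt
    by_contra h
    push_neg at h
    have htpos : 0 < t := by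
      rcases lt_or_eq_of_le h0 with h' | h'
      · exact h'
      · exfalso; rw [← h'] at h; exact absurd (hinit x) (not_lt.mpr h)
    have hxΩ : x ∈ Ω := by
      by_contra hx
      exact absurd (hbdry x hx t ⟨htpos, le_trans hltt.le hts.2⟩) (not_lt.mpr h)
    have hmem : (x, t) ∈ A :=
      ⟨⟨subset_closure hxΩ, ⟨h0, le_trans hltt.le hts.2⟩⟩, sub_nonneg.mpr h⟩
    exact absurd (hpmin hmem) (not_le.mpr hltt)
  -- at time p.2, Φ ≤ v everywhere
  have hle0 : ∀ x, Φ x p.2 ≤ v x p.2 := by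
    intro x
    have hcx : ContinuousOn (fun t => Φ x t - v x t) (Set.Icc (0:ℝ) T) :=
      huc.comp (Continuous.continuousOn (continuous_const.prodMk continuous_id))
        (fun t ht => ⟨Set.mem_univ _, ht⟩)
    have hsubIcc : Set.Ico (0:ℝ) p.2 ⊆ Set.Icc 0 T :=
      fun t ht => ⟨ht.1, le_trans ht.2.le hts.2⟩
    have htend : Filter.Tendsto (fun t => Φ x t - v x t) (𝓝[Set.Ico (0:ℝ) p.2] p.2)
        (𝓝 (Φ x p.2 - v x p.2)) :=
      ((hcx p.2 hts).mono hsubIcc)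
    have hclos : p.2 ∈ closure (Set.Ico (0:ℝ) p.2) := by
      rw [closure_Ico (ne_of_lt hts0)]
      exact ⟨hts0.le, le_rfl⟩
    have : (𝓝[Set.Ico (0:ℝ) p.2] p.2).NeBot := mem_closure_iff_nhdsWithin_neBot.mp hclos
    have hfin : Φ x p.2 - v x p.2 ≤ 0 := by
      refine le_of_tendsto htend ?_
      filter_upwards [self_mem_nhdsWithin] with t ht
      exact (sub_neg.mpr (hlt x t ht.1 ht.2)).le
    linarith
  have hu0 : Φ p.1 p.2 = v p.1 p.2 := le_antisymm (hle0 p.1) (by linarith)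
  have hxsΩ : p.1 ∈ Ω := by
    by_contra h
    exact absurd (hbdry p.1 h p.2 htsIoc) (not_lt.mpr (le_of_eq hu0.symm))
  -- spatial differentiability
  have hΦd : DifferentiableAt ℝ (fun y => Φ y p.2) p.1 :=
    (hΦx p.2 htsIoc).differentiable (by norm_num) p.1
  have hvd : DifferentiableAt ℝ (fun y => v y p.2) p.1 :=
    (hvx p.2 htsIoc).differentiable (by norm_num) p.1
  -- first spatial derivatives coincide
  have e1 : deriv (fun y => Φ y p.2) p.1 = deriv (fun y => v y p.2) p.1 := by
    have hmax : IsLocalMax (fun y => Φ y p.2 - v y p.2) p.1 := by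
      apply Filter.Eventually.of_forall
      intro y
      simp only
      rw [hu0]
      have := hle0 y
      linarith
    have h0 := hmax.deriv_eq_zero
    rw [deriv_fun_sub hΦd hvd] at h0
    linarith
  -- time derivative inequality
  have e2 : deriv (v p.1) p.2 ≤ deriv (Φ p.1) p.2 := by
    have hgd : DifferentiableAt ℝ (fun t => Φ p.1 t - v p.1 t) p.2 :=
      (hΦt p.1 p.2 htsIoc).sub (hvt p.1 p.2 htsIoc)
    have h0 := aux_deriv_nonneg (fun t => Φ p.1 t - v p.1 t) p.2 hts0 hgd ?_
    · rw [deriv_fun_sub (hΦt p.1 p.2 htsIoc) (hvt p.1 p.2 htsIoc)] at h0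
      linarith
    · intro t ht
      have := hlt p.1 t ht.1.le ht.2
      linarith
  -- fracLap inequality
  obtain ⟨MΦ, hMΦ⟩ := hΦb
  obtain ⟨Mv, hMv⟩ := hvb
  obtain ⟨KΦ, hKΦ⟩ := hΦxx
  obtain ⟨Kv, hKv⟩ := hvxx
  have intΦ := aux_integrable α hα.1 hα.2 (fun y => Φ y p.2) MΦ KΦ (hΦx p.2 htsIoc)
    (fun y => hMΦ y p.2 hts) (fun y => hKΦ y p.2 htsIoc) p.1
  have intv := aux_integrable α hα.1 hα.2 (fun y => v y p.2) Mv Kv (hvx p.2 htsIoc)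
    (fun y => hMv y p.2 hts) (fun y => hKv y p.2 htsIoc) p.1
  have e3 : fracLap α (fun y => v y p.2) p.1 ≤ fracLap α (fun y => Φ y p.2) p.1 := by
    rw [← sub_nonneg]
    unfold fracLap
    rw [← integral_sub intΦ intv]
    apply setIntegral_nonneg measurableSet_Ioi
    intro z hz
    rw [div_sub_div_same]
    apply div_nonneg _ (Real.rpow_pos_of_pos hz _).le
    have h1 := hle0 (p.1 + z)
    have h2 := hle0 (p.1 - z)
    have h3 : Φ p.1 p.2 = v p.1 p.2 := hu0
    show (0:ℝ) ≤ 2 * Φ p.1 p.2 - Φ (p.1 + z) p.2 - Φ (p.1 - z) p.2 -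
      (2 * v p.1 p.2 - v (p.1 + z) p.2 - v (p.1 - z) p.2)
    linarith
  -- conclude
  have hc0 : (0:ℝ) ≤ |deriv (fun y => Φ y p.2) p.1| ^ (m - 1) :=
    Real.rpow_nonneg (abs_nonneg _) _
  have hsub' := hsub p.1 hxsΩ p.2 htsIoc
  have hsuper' := hsuper p.1 p.2 htsIoc
  rw [← e1] at hsuper'
  have hmul : |deriv (fun y => Φ y p.2) p.1| ^ (m - 1) * fracLap α (fun y => v y p.2) p.1
      ≤ |deriv (fun y => Φ y p.2) p.1| ^ (m - 1) * fracLap α (fun y => Φ y p.2) p.1 :=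
    mul_le_mul_of_nonneg_left e3 hc0
  linarith
end

section
/- Let N ≥ 1 be an integer and let a, b be positive real numbers with a + b < N. Then there exists a constant C > 0, depending only on N, a and b, such that for all x, y ∈ ℝ^N with x ≠ y, the function z ↦ ‖x − z‖^(a−N) · ‖z − y‖^(b−N) is integrable on ℝ^N and ∫_{ℝ^N} ‖x − z‖^(a−N) ‖z − y‖^(b−N) dz = C · ‖x − y‖^(a+b−N). -/
open MeasureTheory

section RieszAux

open Metric Set Real
open scoped ENNReal

lemma riesz_aux_loc (N : ℕ) (hN : 1 ≤ N) {c : ℝ} (hcN : -(N : ℝ) < c) (hc0 : c < 0) (R : ℝ) :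
    IntegrableOn (fun x : EuclideanSpace ℝ (Fin N) => ‖x‖ ^ c)
      (closedBall (0 : EuclideanSpace ℝ (Fin N)) R) := by
  haveI : Nonempty (Fin N) := ⟨⟨0, hN⟩⟩
  set μ : Measure (EuclideanSpace ℝ (Fin N)) :=
    volume.restrict (closedBall (0 : EuclideanSpace ℝ (Fin N)) R) with hμ
  have hmeas : Measurable (fun x : EuclideanSpace ℝ (Fin N) => ‖x‖ ^ c) := by fun_prop
  refine ⟨hmeas.aestronglyMeasurable, ?_⟩
  rw [HasFiniteIntegral, lintegral_enorm_of_nonneg (fun x => rpow_nonneg (norm_nonneg _) _)]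
  rw [lintegral_eq_lintegral_meas_le μ
    (Filter.Eventually.of_forall (fun x => rpow_nonneg (norm_nonneg _) _)) hmeas.aemeasurable]
  have hsub : ∀ t : ℝ, 0 < t →
      {a : EuclideanSpace ℝ (Fin N) | t ≤ ‖a‖ ^ c} ⊆ closedBall 0 (t ^ c⁻¹) := by
    intro t ht a ha
    simp only [mem_setOf_eq] at ha
    rcases eq_or_ne a 0 with rfl | h0
    · exfalso
      rw [norm_zero, Real.zero_rpow hc0.ne] at ha
      exact absurd (ht.trans_le ha) (lt_irrefl 0)
    · have hna : 0 < ‖a‖ := norm_pos_iff.mpr h0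
      rw [mem_closedBall_zero_iff]
      exact (Real.le_rpow_inv_iff_of_neg hna ht hc0).mpr ha
  calc ∫⁻ t in Ioi (0:ℝ), μ {a : EuclideanSpace ℝ (Fin N) | t ≤ ‖a‖ ^ c}
      ≤ ∫⁻ t in Ioc (0:ℝ) 1 ∪ Ioi 1, μ {a : EuclideanSpace ℝ (Fin N) | t ≤ ‖a‖ ^ c} :=
        lintegral_mono_set Ioi_subset_Ioc_union_Ioi
    _ ≤ (∫⁻ t in Ioc (0:ℝ) 1, μ {a : EuclideanSpace ℝ (Fin N) | t ≤ ‖a‖ ^ c})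
        + ∫⁻ t in Ioi (1:ℝ), μ {a : EuclideanSpace ℝ (Fin N) | t ≤ ‖a‖ ^ c} :=
        lintegral_union_le _ _ _
    _ < ∞ := by
        refine ENNReal.add_lt_top.2 ⟨?_, ?_⟩
        · calc ∫⁻ t in Ioc (0:ℝ) 1, μ {a : EuclideanSpace ℝ (Fin N) | t ≤ ‖a‖ ^ c}
              ≤ ∫⁻ _ in Ioc (0:ℝ) 1, volume (closedBall (0 : EuclideanSpace ℝ (Fin N)) R) := by
                refine setLIntegral_mono' measurableSet_Ioc (fun t ht => ?_)
                exact le_trans (measure_mono (subset_univ _))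
                  (by rw [hμ, Measure.restrict_apply_univ])
          _ < ∞ := by
                rw [setLIntegral_const]
                exact ENNReal.mul_lt_top measure_closedBall_lt_top (by simp)
        · calc ∫⁻ t in Ioi (1:ℝ), μ {a : EuclideanSpace ℝ (Fin N) | t ≤ ‖a‖ ^ c}
              ≤ ∫⁻ t in Ioi (1:ℝ),
                  ENNReal.ofReal (t ^ (c⁻¹ * N)) *
                    volume (closedBall (0 : EuclideanSpace ℝ (Fin N)) 1) := by
                refine setLIntegral_mono' measurableSet_Ioi (fun t ht => ?_)
                have ht0 : (0:ℝ) < t := lt_trans zero_lt_one ht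
                have h1 : μ {a : EuclideanSpace ℝ (Fin N) | t ≤ ‖a‖ ^ c} ≤
                    volume (closedBall (0 : EuclideanSpace ℝ (Fin N)) (t ^ c⁻¹)) :=
                  le_trans (Measure.restrict_le_self _) (measure_mono (hsub t ht0))
                refine h1.trans ?_
                rw [Measure.addHaar_closedBall _ _ (rpow_nonneg ht0.le _)]
                have heq : (t ^ c⁻¹) ^ (Module.finrank ℝ (EuclideanSpace ℝ (Fin N)))
                    = t ^ (c⁻¹ * N) := by
                  rw [← Real.rpow_natCast (t ^ c⁻¹) _, ← Real.rpow_mul ht0.le,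
                    finrank_euclideanSpace_fin]
                rw [heq]
                exact mul_le_mul_right (measure_mono ball_subset_closedBall) _
          _ < ∞ := by
                rw [lintegral_mul_const' _ _ measure_closedBall_lt_top.ne]
                refine ENNReal.mul_lt_top ?_ measure_closedBall_lt_top
                refine IntegrableOn.setLIntegral_lt_top ?_
                refine integrableOn_Ioi_rpow_of_lt ?_ zero_lt_one
                rw [mul_comm, ← div_eq_mul_inv, div_lt_iff_of_neg hc0]
                linarith

lemma riesz_aux_int (N : ℕ) (hN : 1 ≤ N) (a b : ℝ) (ha : 0 < a) (hb : 0 < b)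
    (hab : a + b < (N : ℝ)) (e : EuclideanSpace ℝ (Fin N)) (he : ‖e‖ = 1) :
    Integrable (fun w : EuclideanSpace ℝ (Fin N) =>
      ‖e - w‖ ^ (a - (N : ℝ)) * ‖w‖ ^ (b - (N : ℝ))) := by
  haveI : Nonempty (Fin N) := ⟨⟨0, hN⟩⟩
  have haN : a - (N : ℝ) < 0 := by
    have : a < (N : ℝ) := by linarith
    linarith
  have hbN : b - (N : ℝ) < 0 := by
    have : b < (N : ℝ) := by linarith
    linarith
  have haN' : -(N : ℝ) < a - (N : ℝ) := by linarith
  have hbN' : -(N : ℝ) < b - (N : ℝ) := by linarith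
  set g : EuclideanSpace ℝ (Fin N) → ℝ :=
    fun w => ‖e - w‖ ^ (a - (N : ℝ)) * ‖w‖ ^ (b - (N : ℝ)) with hg
  have hgm : Measurable g := by fun_prop
  have hgnn : ∀ w, 0 ≤ g w := fun w => by
    exact mul_nonneg (rpow_nonneg (norm_nonneg _) _) (rpow_nonneg (norm_nonneg _) _)
  set A : Set (EuclideanSpace ℝ (Fin N)) := closedBall 0 2⁻¹ with hA'
  set B : Set (EuclideanSpace ℝ (Fin N)) := closedBall e 2⁻¹ with hB'
  -- integrable on A
  have hA : IntegrableOn g A := by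
    refine Integrable.mono'
      (((riesz_aux_loc N hN hbN' hbN 2⁻¹).const_mul ((2:ℝ)⁻¹ ^ (a - (N:ℝ)))))
      hgm.aestronglyMeasurable.restrict ?_
    refine (ae_restrict_iff' measurableSet_closedBall).mpr (ae_of_all _ fun w hw => ?_)
    have hw2 : ‖w‖ ≤ 2⁻¹ := mem_closedBall_zero_iff.mp hw
    have hew : (2:ℝ)⁻¹ ≤ ‖e - w‖ := by
      have := norm_sub_norm_le e w
      rw [he] at this
      linarith
    rw [Real.norm_eq_abs, abs_of_nonneg (hgnn w)]
    refine mul_le_mul_of_nonneg_right ?_ (rpow_nonneg (norm_nonneg _) _)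
    exact Real.rpow_le_rpow_of_nonpos (by norm_num) hew haN.le
  -- integrable on B
  have hB : IntegrableOn g B := by
    have hφ : MeasurePreserving (fun v : EuclideanSpace ℝ (Fin N) => e - v) volume volume := by
      have h1 := Measure.measurePreserving_neg (volume : Measure (EuclideanSpace ℝ (Fin N)))
      have h2 := measurePreserving_add_left (volume : Measure (EuclideanSpace ℝ (Fin N))) e
      have := h2.comp h1
      simpa [Function.comp_def, sub_eq_add_neg] using this
    have hemb : MeasurableEmbedding (fun v : EuclideanSpace ℝ (Fin N) => e - v) :=
      (Homeomorph.subLeft e).measurableEmbedding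
    have hpre : (fun v : EuclideanSpace ℝ (Fin N) => e - v) ⁻¹'
        (closedBall (0 : EuclideanSpace ℝ (Fin N)) 2⁻¹) = B := by
      ext w
      simp [hB', mem_closedBall_zero_iff, mem_closedBall, dist_eq_norm, norm_sub_rev]
    have h0 : IntegrableOn (fun w : EuclideanSpace ℝ (Fin N) => ‖e - w‖ ^ (a - (N:ℝ))) B := by
      have := (hφ.integrableOn_comp_preimage hemb
        (f := fun v : EuclideanSpace ℝ (Fin N) => ‖v‖ ^ (a - (N:ℝ)))
        (s := closedBall (0 : EuclideanSpace ℝ (Fin N)) 2⁻¹)).mpr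
        (riesz_aux_loc N hN haN' haN 2⁻¹)
      rwa [hpre] at this
    refine Integrable.mono' (h0.const_mul ((2:ℝ)⁻¹ ^ (b - (N:ℝ))))
      hgm.aestronglyMeasurable.restrict ?_
    refine (ae_restrict_iff' measurableSet_closedBall).mpr (ae_of_all _ fun w hw => ?_)
    have hw2 : ‖e - w‖ ≤ 2⁻¹ := by
      rw [mem_closedBall, dist_eq_norm, ← norm_sub_rev] at hw
      exact hw
    have hww : (2:ℝ)⁻¹ ≤ ‖w‖ := by
      have := norm_sub_norm_le e w
      have h3 : ‖e‖ - ‖e - w‖ ≤ ‖w‖ := by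
        have := norm_sub_norm_le e (e - w)
        simpa [sub_sub_cancel] using this
      rw [he] at h3
      linarith
    rw [Real.norm_eq_abs, abs_of_nonneg (hgnn w), hg]
    calc ‖e - w‖ ^ (a - (N:ℝ)) * ‖w‖ ^ (b - (N:ℝ))
        ≤ ‖e - w‖ ^ (a - (N:ℝ)) * (2:ℝ)⁻¹ ^ (b - (N:ℝ)) := by
          refine mul_le_mul_of_nonneg_left ?_ (rpow_nonneg (norm_nonneg _) _)
          exact Real.rpow_le_rpow_of_nonpos (by norm_num) hww hbN.le
      _ = (2:ℝ)⁻¹ ^ (b - (N:ℝ)) * ‖e - w‖ ^ (a - (N:ℝ)) := mul_comm _ _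
  -- integrable on the complement
  have hC : IntegrableOn g ((A ∪ B)ᶜ) := by
    set rr : ℝ := 2 * N - a - b with hrr
    have hNrr : (Module.finrank ℝ (EuclideanSpace ℝ (Fin N)) : ℝ) < rr := by
      rw [finrank_euclideanSpace_fin]
      simp only [hrr]
      linarith
    have hint : Integrable (fun w : EuclideanSpace ℝ (Fin N) => (1 + ‖w‖) ^ (-rr)) :=
      integrable_one_add_norm hNrr
    set K : ℝ := ((5:ℝ) ^ (a - (N:ℝ)) * (3:ℝ) ^ (b - (N:ℝ)))⁻¹ with hK
    refine Integrable.mono' ((hint.const_mul K).integrableOn)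
      hgm.aestronglyMeasurable.restrict ?_
    refine (ae_restrict_iff' (measurableSet_closedBall.union measurableSet_closedBall).compl).mpr
      (ae_of_all _ fun w hw => ?_)
    simp only [mem_compl_iff, mem_union, not_or, hA', hB', mem_closedBall,
      mem_closedBall_zero_iff, dist_eq_norm, sub_zero] at hw
    have h1 : (2:ℝ)⁻¹ ≤ ‖w‖ := le_of_not_ge hw.1
    have h2 : (2:ℝ)⁻¹ ≤ ‖e - w‖ := by
      rw [← norm_sub_rev]
      exact le_of_not_ge hw.2
    have hx0 : (0:ℝ) < 1 + ‖w‖ := by positivity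
    have hwe : ‖w‖ ≤ 1 + ‖e - w‖ := by
      have := norm_sub_norm_le w (w - e)
      simp only [sub_sub_cancel] at this
      rw [norm_sub_rev] at this
      linarith [he ▸ this]
    have hb1 : (1 + ‖w‖) / 5 ≤ ‖e - w‖ := by linarith
    have hb2 : (1 + ‖w‖) / 3 ≤ ‖w‖ := by linarith
    rw [Real.norm_eq_abs, abs_of_nonneg (hgnn w), hg]
    calc ‖e - w‖ ^ (a - (N:ℝ)) * ‖w‖ ^ (b - (N:ℝ))
        ≤ ((1 + ‖w‖) / 5) ^ (a - (N:ℝ)) * (((1 + ‖w‖) / 3) ^ (b - (N:ℝ))) := by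
          refine mul_le_mul (Real.rpow_le_rpow_of_nonpos (by positivity) hb1 haN.le)
            (Real.rpow_le_rpow_of_nonpos (by positivity) hb2 hbN.le)
            (rpow_nonneg (norm_nonneg _) _) (rpow_nonneg (by positivity) _)
      _ = K * (1 + ‖w‖) ^ (-rr) := by
          rw [Real.div_rpow hx0.le (by norm_num : (0:ℝ) ≤ 5),
            Real.div_rpow hx0.le (by norm_num : (0:ℝ) ≤ 3), div_mul_div_comm,
            ← Real.rpow_add hx0, show a - (N:ℝ) + (b - (N:ℝ)) = -rr by rw [hrr]; ring,
            div_eq_mul_inv, ← hK, mul_comm]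
  have h12 : IntegrableOn g ((A ∪ B) ∪ (A ∪ B)ᶜ) := (hA.union hB).union hC
  rw [union_compl_self] at h12
  exact integrableOn_univ.mp h12

/-- Composition (semigroup) property of Riesz kernels: for `N ≥ 1`
and `a, b > 0` with `a + b < N`, there is a constant `C > 0`, depending only on
`N, a, b`, such that for all `x ≠ y` in `ℝ^N`, the function
`z ↦ ‖x − z‖^(a−N) ‖z − y‖^(b−N)` is integrable and
`∫ ‖x − z‖^(a−N) ‖z − y‖^(b−N) dz = C ‖x − y‖^(a+b−N)`. -/
theorem riesz_kernel_composition (N : ℕ) (hN : 1 ≤ N) (a b : ℝ)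
    (ha : 0 < a) (hb : 0 < b) (hab : a + b < (N : ℝ)) :
    ∃ C : ℝ, 0 < C ∧
      ∀ x y : EuclideanSpace ℝ (Fin N), x ≠ y →
        Integrable (fun z : EuclideanSpace ℝ (Fin N) =>
          ‖x - z‖ ^ (a - (N : ℝ)) * ‖z - y‖ ^ (b - (N : ℝ))) ∧
        ∫ z : EuclideanSpace ℝ (Fin N),
            ‖x - z‖ ^ (a - (N : ℝ)) * ‖z - y‖ ^ (b - (N : ℝ)) =
          C * ‖x - y‖ ^ (a + b - (N : ℝ)) := by
  haveI : Nonempty (Fin N) := ⟨⟨0, hN⟩⟩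
  set e : EuclideanSpace ℝ (Fin N) := EuclideanSpace.single ⟨0, hN⟩ (1:ℝ) with he'
  have he : ‖e‖ = 1 := by rw [he', EuclideanSpace.norm_single]; norm_num
  set g : EuclideanSpace ℝ (Fin N) → ℝ :=
    fun w => ‖e - w‖ ^ (a - (N : ℝ)) * ‖w‖ ^ (b - (N : ℝ)) with hgdef
  have hg : Integrable g := riesz_aux_int N hN a b ha hb hab e he
  have hgnn : ∀ w, 0 ≤ g w := fun w =>
    mul_nonneg (rpow_nonneg (norm_nonneg _) _) (rpow_nonneg (norm_nonneg _) _)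
  set C : ℝ := ∫ w, g w with hC
  have hCpos : 0 < C := by
    rw [hC, integral_pos_iff_support_of_nonneg hgnn hg]
    have hsub : ball ((2:ℝ) • e) 2⁻¹ ⊆ Function.support g := by
      intro w hw
      rw [mem_ball, dist_eq_norm] at hw
      have hne : (2:ℝ) • e ≠ 0 := by
        intro h
        have : ‖(2:ℝ) • e‖ = 0 := by rw [h, norm_zero]
        rw [norm_smul, he] at this
        norm_num at this
      have hw0 : w ≠ 0 := by
        intro h
        rw [h, zero_sub, norm_neg, norm_smul, he] at hw
        norm_num at hw
      have hwe : e - w ≠ 0 := by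
        intro h
        have hwe' : w = e := by
          have := sub_eq_zero.mp h
          exact this.symm
        rw [hwe'] at hw
        have : (2:ℝ) • e - e = e := by
          rw [two_smul]; abel
        rw [← neg_sub, norm_neg, this, he] at hw
        norm_num at hw
      have : 0 < g w := mul_pos (rpow_pos_of_pos (norm_pos_iff.mpr hwe) _)
        (rpow_pos_of_pos (norm_pos_iff.mpr hw0) _)
      exact Function.mem_support.mpr this.ne'
    exact lt_of_lt_of_le (measure_ball_pos volume _ (by norm_num)) (measure_mono hsub)
  refine ⟨C, hCpos, fun x y hxy => ?_⟩
  set r : ℝ := ‖x - y‖ with hr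
  have hr0 : 0 < r := norm_pos_iff.mpr (sub_ne_zero.mpr hxy)
  set u : EuclideanSpace ℝ (Fin N) := r⁻¹ • (x - y) with hu'
  have hu : ‖u‖ = 1 := by
    rw [hu', norm_smul, Real.norm_eq_abs, abs_of_pos (inv_pos.mpr hr0), ← hr,
      inv_mul_cancel₀ hr0.ne']
  have hru : r • u = x - y := by
    rw [hu', smul_smul, mul_inv_cancel₀ hr0.ne', one_smul]
  -- rotation sending e to u
  set T : EuclideanSpace ℝ (Fin N) ≃ₗᵢ[ℝ] EuclideanSpace ℝ (Fin N) :=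
    Submodule.reflection (ℝ ∙ (e - u))ᗮ with hT'
  have hT : T e = u := Submodule.reflection_sub (by rw [he, hu])
  set f : EuclideanSpace ℝ (Fin N) → ℝ :=
    fun z => ‖x - z‖ ^ (a - (N : ℝ)) * ‖z - y‖ ^ (b - (N : ℝ)) with hfdef
  -- pointwise identity
  have hpt : ∀ w, f (y + r • T w) = (r ^ (a - (N:ℝ)) * r ^ (b - (N:ℝ))) * g w := by
    intro w
    have h1 : x - (y + r • T w) = r • T (e - w) := by
      rw [map_sub, smul_sub, hT, hru]
      abel
    have h2 : (y + r • T w) - y = r • T w := by abel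
    rw [hfdef, hgdef]
    simp only [h1, h2, norm_smul, Real.norm_eq_abs, abs_of_pos hr0,
      LinearIsometryEquiv.norm_map]
    rw [Real.mul_rpow hr0.le (norm_nonneg _), Real.mul_rpow hr0.le (norm_nonneg _)]
    ring
  have hTm : MeasurePreserving (T : EuclideanSpace ℝ (Fin N) → EuclideanSpace ℝ (Fin N))
      volume volume := T.measurePreserving
  have hTemb : MeasurableEmbedding (T : EuclideanSpace ℝ (Fin N) → EuclideanSpace ℝ (Fin N)) :=
    T.toHomeomorph.measurableEmbedding
  -- integrability
  have h4 : Integrable (fun w => f (y + r • T w)) :=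
    (hg.const_mul (r ^ (a - (N:ℝ)) * r ^ (b - (N:ℝ)))).congr
      (Filter.EventuallyEq.of_eq (funext fun w => (hpt w).symm))
  have h3 : Integrable (fun w => f (y + r • w)) :=
    (hTm.integrable_comp_emb hTemb (g := fun w => f (y + r • w))).mp
      (by simpa [Function.comp_def] using h4)
  have h2 : Integrable (fun v => f (y + v)) :=
    (integrable_comp_smul_iff volume (fun v => f (y + v)) hr0.ne').mp h3
  have hfint : Integrable f := by
    have h1 := h2.comp_sub_right y
    exact h1.congr (Filter.EventuallyEq.of_eq (funext fun z => congrArg f (by abel)))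
  refine ⟨hfint, ?_⟩
  have key : ∫ w, f (y + r • T w) = (r ^ (a - (N:ℝ)) * r ^ (b - (N:ℝ))) * C := by
    calc ∫ w, f (y + r • T w)
        = ∫ w, (r ^ (a - (N:ℝ)) * r ^ (b - (N:ℝ))) * g w := by
          exact integral_congr_ae (Filter.EventuallyEq.of_eq (funext hpt))
      _ = (r ^ (a - (N:ℝ)) * r ^ (b - (N:ℝ))) * ∫ w, g w := by rw [integral_const_mul]
      _ = (r ^ (a - (N:ℝ)) * r ^ (b - (N:ℝ))) * C := by rw [hC]
  have hrot : ∫ w, f (y + r • T w) = ∫ w, f (y + r • w) :=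
    hTm.integral_comp hTemb (fun w => f (y + r • w))
  have hsc : ∫ v, f (y + v)
      = (r ^ (Module.finrank ℝ (EuclideanSpace ℝ (Fin N)))) • ∫ w, f (y + r • w) := by
    rw [Measure.integral_comp_smul_of_nonneg volume (fun v => f (y + v)) r (hR := hr0.le),
      smul_smul, mul_inv_cancel₀ (pow_ne_zero _ hr0.ne'), one_smul]
  have htr : ∫ z, f z = ∫ v, f (y + v) := (integral_add_left_eq_self f y).symm
  rw [htr, hsc, ← hrot, key, smul_eq_mul, finrank_euclideanSpace_fin,
    ← Real.rpow_natCast r N,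
    show r ^ ((N:ℕ):ℝ) * (r ^ (a - (N:ℝ)) * r ^ (b - (N:ℝ)) * C)
      = (r ^ ((N:ℕ):ℝ) * r ^ (a - (N:ℝ)) * r ^ (b - (N:ℝ))) * C by ring,
    ← Real.rpow_add hr0, ← Real.rpow_add hr0,
    show ((N:ℕ):ℝ) + (a - (N:ℝ)) + (b - (N:ℝ)) = a + b - (N:ℝ) by push_cast; ring,
    mul_comm]
end RieszAux
end
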